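/- Let n ≥ 2 and let ω be a SAP of length 2n in Z². Among the 4n representatives ρ ∈ {T^j ω, (T^j ω)^R : 0 ≤ j ≤ 2n−1} of the equivalence class of ω, the number of ρ such that the translate ρ − ρ_0 belongs to Γ^+_{2n} is either 0 or 2; it equals 2 if and only if the set of vertices of ω of minimal second coordinate consists of exactly two points and these two points are joined by an edge of ω (i.e., ω has a unique horizontal bond at the minimal height and no other vertex at that height). -/
import Mathlib


/-- Two points of `ℤ²` are nearest neighbors. -/
def Nbr (p q : ℤ × ℤ) : Prop := |q.1 - p.1| + |q.2 - p.2| = 1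

/-- A self-avoiding polygon of length `2n` in `ℤ²`: a nearest-neighbor closed loop
`ω_0, …, ω_{2n} = ω_0` with `ω_0, …, ω_{2n-1}` pairwise distinct. -/
def IsSAP (n : ℕ) (ω : Fin (2 * n + 1) → ℤ × ℤ) : Prop :=
  (∀ (i : ℕ) (h : i + 1 < 2 * n + 1), Nbr (ω ⟨i, Nat.lt_of_succ_lt h⟩) (ω ⟨i + 1, h⟩)) ∧
    ω (Fin.last (2 * n)) = ω 0 ∧
    ∀ j k : Fin (2 * n + 1), j.val < 2 * n → k.val < 2 * n → ω j = ω k → j = k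

/-- `rotSAP n j ω` is the rotation `T^j ω` of the polygon `ω`, traversing the same
cyclic sequence of points starting from `ω_j` (indices mod `2n`). -/
def rotSAP (n j : ℕ) (ω : Fin (2 * n + 1) → ℤ × ℤ) : Fin (2 * n + 1) → ℤ × ℤ :=
  fun i =>
    if h : 0 < 2 * n then ω ⟨(i.val + j) % (2 * n), Nat.lt_succ_of_lt (Nat.mod_lt _ h)⟩
    else ω i

/-- `revW m ω` is the reversal `ω^R` of the walk `ω` with `m+1` vertices. -/
def revW (m : ℕ) (ω : Fin (m + 1) → ℤ × ℤ) : Fin (m + 1) → ℤ × ℤ :=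
  fun i => ω ⟨m - i.val, Nat.lt_succ_of_le (Nat.sub_le m i.val)⟩

/-- `repSAP n j r ω` is the representative `T^j ω` (if `r = false`) or
`(T^j ω)^R` (if `r = true`) of the equivalence class of `ω`. -/
def repSAP (n j : ℕ) (r : Bool) (ω : Fin (2 * n + 1) → ℤ × ℤ) : Fin (2 * n + 1) → ℤ × ℤ :=
  if r then revW (2 * n) (rotSAP n j ω) else rotSAP n j ω

/-- `Γ⁺_{2n}`: self-avoiding polygons of length `2n` rooted at the origin whose
points `ω_1, …, ω_{2n-2}` all have strictly positive second coordinate. -/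
def GammaPlus (n : ℕ) (ρ : Fin (2 * n + 1) → ℤ × ℤ) : Prop :=
  IsSAP n ρ ∧ ρ 0 = 0 ∧
    ∀ i : Fin (2 * n + 1), 1 ≤ i.val → i.val ≤ 2 * n - 2 → 0 < (ρ i).2


namespace SAPhelp

lemma nbr_symm {p q : ℤ × ℤ} (h : Nbr p q) : Nbr q p := by
  unfold Nbr at *
  rw [abs_sub_comm p.1 q.1, abs_sub_comm p.2 q.2]
  exact h

lemma nbr_sub {p q c : ℤ × ℤ} (h : Nbr p q) : Nbr (p - c) (q - c) := by
  unfold Nbr at *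
  simpa using h

/-- periodic extension of the polygon to all of ℕ -/
def w (n : ℕ) (ω : Fin (2 * n + 1) → ℤ × ℤ) (l : ℕ) : ℤ × ℤ :=
  if h : 0 < 2 * n then ω ⟨l % (2 * n), Nat.lt_succ_of_lt (Nat.mod_lt _ h)⟩ else ω 0

variable {n : ℕ} {ω : Fin (2 * n + 1) → ℤ × ℤ}

lemma w_def (hn : 0 < n) (l : ℕ) :
    w n ω l = ω ⟨l % (2 * n), Nat.lt_succ_of_lt (Nat.mod_lt _ (by omega))⟩ := by
  unfold w
  rw [dif_pos (by omega : 0 < 2 * n)]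

lemma w_congr (hn : 0 < n) {a b : ℕ} (h : a % (2 * n) = b % (2 * n)) :
    w n ω a = w n ω b := by
  rw [w_def hn a, w_def hn b]
  congr 1
  exact Fin.ext h

lemma w_eq (hn : 0 < n) (hω : ω (Fin.last (2 * n)) = ω 0) {l : ℕ} (h : l < 2 * n + 1) :
    w n ω l = ω ⟨l, h⟩ := by
  rw [w_def hn]
  rcases Nat.lt_or_ge l (2 * n) with h' | h'
  · congr 1
    exact Fin.ext (Nat.mod_eq_of_lt h')
  · have hl : l = 2 * n := by omega
    subst hl
    have h1 : (⟨2 * n, h⟩ : Fin (2 * n + 1)) = Fin.last (2 * n) := rfl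
    rw [h1, hω]
    congr 1
    exact Fin.ext (by simpa using Nat.mod_self (2 * n))

lemma w_add (hn : 0 < n) (l : ℕ) : w n ω (l + 2 * n) = w n ω l :=
  w_congr hn (Nat.add_mod_right l (2 * n))

lemma w_step (hn : 0 < n) (hω : IsSAP n ω) (l : ℕ) :
    Nbr (w n ω l) (w n ω (l + 1)) := by
  have h2n : 0 < 2 * n := by omega
  have halt : l % (2 * n) < 2 * n := Nat.mod_lt _ h2n
  have h1 : (l + 1) % (2 * n) = (l % (2 * n) + 1) % (2 * n) := by
    conv_lhs => rw [Nat.add_mod]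
    rw [Nat.mod_eq_of_lt (show 1 < 2 * n by omega)]
  rcases Nat.lt_or_ge (l % (2 * n) + 1) (2 * n) with h' | h'
  · have hs := hω.1 (l % (2 * n)) (by omega)
    rw [w_def hn, w_def hn]
    have e2 : (l + 1) % (2 * n) = l % (2 * n) + 1 := by
      rw [h1]; exact Nat.mod_eq_of_lt h'
    simp only [e2]
    exact hs
  · have hl : l % (2 * n) = 2 * n - 1 := by omega
    have e2 : (l + 1) % (2 * n) = 0 := by
      rw [h1, hl, show 2 * n - 1 + 1 = 2 * n by omega, Nat.mod_self]
    have hs := hω.1 (2 * n - 1) (by omega)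
    have e3 : (⟨2 * n - 1 + 1, by omega⟩ : Fin (2 * n + 1)) = Fin.last (2 * n) :=
      Fin.ext (by simp; omega)
    rw [e3, hω.2.1] at hs
    rw [w_def hn, w_def hn]
    simp only [hl, e2]
    convert hs using 2
    all_goals exact Fin.ext (by simp)

lemma w_inj (hn : 0 < n) (hω : IsSAP n ω) {a b : ℕ} (h : w n ω a = w n ω b) :
    a % (2 * n) = b % (2 * n) := by
  have h2n : 0 < 2 * n := by omega
  rw [w_def hn, w_def hn] at h
  have := hω.2.2 _ _ (Nat.mod_lt a h2n) (Nat.mod_lt b h2n) h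
  exact congrArg Fin.val this

lemma w_range (hn : 0 < n) (hω : ω (Fin.last (2 * n)) = ω 0) :
    Set.range (w n ω) = Set.range ω := by
  apply Set.Subset.antisymm
  · rintro x ⟨l, rfl⟩
    rw [w_def hn]
    exact Set.mem_range_self _
  · rintro x ⟨i, rfl⟩
    exact ⟨i.val, w_eq hn hω i.isLt⟩

lemma rep_false (hn : 0 < n) (j : ℕ) (i : Fin (2 * n + 1)) :
    repSAP n j false ω i = w n ω (i.val + j) := by
  have h2 : 0 < 2 * n := by omega
  simp only [repSAP, Bool.false_eq_true, if_false, rotSAP, w, dif_pos h2]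

lemma rep_true (hn : 0 < n) (j : ℕ) (i : Fin (2 * n + 1)) :
    repSAP n j true ω i = w n ω ((2 * n - i.val) + j) := by
  have h2 : 0 < 2 * n := by omega
  simp only [repSAP, if_true, revW, rotSAP, w, dif_pos h2]

lemma succ_mod (hn : 0 < n) (a : ℕ) :
    (a + 1) % (2 * n) = (a % (2 * n) + 1) % (2 * n) := by
  conv_lhs => rw [Nat.add_mod]
  rw [Nat.mod_eq_of_lt (show 1 < 2 * n by omega)]

lemma mod_key (hn : 0 < n) (l j : ℕ) :
    ((l + (2 * n - j % (2 * n))) % (2 * n) + j) % (2 * n) = l % (2 * n) := by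
  have h2n : 0 < 2 * n := by omega
  have h1 : j % (2 * n) ≤ j := Nat.mod_le _ _
  have h2 : j % (2 * n) < 2 * n := Nat.mod_lt _ h2n
  rw [Nat.mod_add_mod]
  have h3 : l + (2 * n - j % (2 * n)) + j = l + (j - j % (2 * n)) + 2 * n := by omega
  rw [h3]
  have h4 : j - j % (2 * n) = 2 * n * (j / (2 * n)) := by
    have := Nat.div_add_mod j (2 * n); omega
  rw [h4, Nat.add_mod_right, Nat.add_mul_mod_self_left]

lemma range_rep (hn : 0 < n) (hc : ω (Fin.last (2 * n)) = ω 0) (j : ℕ) (r : Bool) :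
    Set.range (repSAP n j r ω) = Set.range ω := by
  have h2n : 0 < 2 * n := by omega
  apply Set.Subset.antisymm
  · rintro x ⟨i, rfl⟩
    cases r
    · rw [rep_false hn, ← w_range hn hc]; exact Set.mem_range_self _
    · rw [rep_true hn, ← w_range hn hc]; exact Set.mem_range_self _
  · rintro x ⟨i, rfl⟩
    set t := (i.val + (2 * n - j % (2 * n))) % (2 * n) with ht
    have htlt : t < 2 * n := Nat.mod_lt _ h2n
    have key : w n ω (t + j) = ω i := by
      rw [w_congr hn (mod_key hn i.val j), w_eq hn hc i.isLt]
    cases r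
    · exact ⟨⟨t, by omega⟩, by rw [rep_false hn]; exact key⟩
    · refine ⟨⟨ 2 * n - t, by omega⟩, ?_⟩
      rw [rep_true hn]
      rw [show 2 * n - (2 * n - t) = t by omega]
      exact key

lemma edge_w (hn : 0 < n) (hc : ω (Fin.last (2 * n)) = ω 0) (a : ℕ) :
    ∃ i : Fin (2 * n),
      ω ⟨i.val, Nat.lt_succ_of_lt i.isLt⟩ = w n ω a ∧
      ω ⟨i.val + 1, Nat.succ_lt_succ i.isLt⟩ = w n ω (a + 1) := by
  have h2n : 0 < 2 * n := by omega
  refine ⟨⟨a % (2 * n), Nat.mod_lt _ h2n⟩, ?_, ?_⟩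
  · rw [w_def hn]
  · have hlt : a % (2 * n) < 2 * n := Nat.mod_lt _ h2n
    rw [w_congr hn (succ_mod hn a),
      w_eq hn hc (show a % (2 * n) + 1 < 2 * n + 1 by omega)]

lemma w_inj_lt (hn : 0 < n) (hω : IsSAP n ω) {a b t : ℕ} (ha : a < 2 * n) (hb : b < 2 * n)
    (h : w n ω (a + t) = w n ω (b + t)) : a = b := by
  have h1 : Nat.ModEq (2 * n) (a + t) (b + t) := w_inj hn hω h
  have h2 : Nat.ModEq (2 * n) a b := h1.add_right_cancel' t
  rw [Nat.ModEq, Nat.mod_eq_of_lt ha, Nat.mod_eq_of_lt hb] at h2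
  exact h2

lemma isSAP_rotw (hn : 0 < n) (hω : IsSAP n ω) (t : ℕ) (c : ℤ × ℤ) :
    IsSAP n (fun k : Fin (2 * n + 1) => w n ω (k.val + t) - c) := by
  refine ⟨?_, ?_, ?_⟩
  · intro i h
    simp only
    rw [show i + 1 + t = (i + t) + 1 by omega]
    exact nbr_sub (w_step hn hω (i + t))
  · simp only [Fin.val_last, Fin.val_zero, Nat.zero_add]
    rw [show 2 * n + t = t + 2 * n by omega, w_add hn]
  · intro j k hj hk h
    simp only at h
    exact Fin.ext (w_inj_lt hn hω hj hk ((sub_left_inj).1 h))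

lemma isSAP_revw (hn : 0 < n) (hω : IsSAP n ω) (t : ℕ) (c : ℤ × ℤ) :
    IsSAP n (fun k : Fin (2 * n + 1) => w n ω ((2 * n - k.val) + t) - c) := by
  refine ⟨?_, ?_, ?_⟩
  · intro i h
    simp only
    have hi : i < 2 * n := by omega
    have h1 := nbr_sub (c := c) (w_step hn hω (2 * n - (i + 1) + t))
    rw [show 2 * n - (i + 1) + t + 1 = (2 * n - i) + t by omega] at h1
    exact nbr_symm h1
  · simp only [Fin.val_last, Fin.val_zero, Nat.sub_self, Nat.sub_zero, Nat.zero_add]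
    rw [show 2 * n + t = t + 2 * n by omega, w_add hn]
  · intro j k hj hk h
    simp only at h
    have h2 : Nat.ModEq (2 * n) (2 * n - j.val + t) (2 * n - k.val + t) :=
      w_inj hn hω ((sub_left_inj).1 h)
    have h3 : Nat.ModEq (2 * n) (2 * n - j.val) (2 * n - k.val) := h2.add_right_cancel' t
    have h4 := h3.add_right (j.val + k.val)
    rw [show 2 * n - j.val + (j.val + k.val) = k.val + 2 * n by omega,
        show 2 * n - k.val + (j.val + k.val) = j.val + 2 * n by omega] at h4
    have h5 : (k.val + 2 * n) % (2 * n) = (j.val + 2 * n) % (2 * n) := h4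
    rw [Nat.add_mod_right, Nat.add_mod_right, Nat.mod_eq_of_lt hk, Nat.mod_eq_of_lt hj] at h5
    exact Fin.ext h5.symm

end SAPhelp

namespace SAPhelp

variable {n : ℕ} {ω : Fin (2 * n + 1) → ℤ × ℤ}

set_option maxHeartbeats 1000000 in
lemma gp_min (hn : 2 ≤ n) (hω : IsSAP n ω) {ρ : Fin (2 * n + 1) → ℤ × ℤ}
    (hrange : Set.range ρ = Set.range ω)
    (hGP : GammaPlus n (fun k => ρ k - ρ 0)) :
    ρ 0 ≠ ρ ⟨2 * n - 1, by omega⟩ ∧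
    {x : ℤ × ℤ | x ∈ Set.range ω ∧ ∀ i : Fin (2 * n + 1), x.2 ≤ (ω i).2}
      = {ρ 0, ρ ⟨2 * n - 1, by omega⟩} := by
  have h0 : 0 < n := by omega
  have E0 : 0 < 2 * n + 1 := by omega
  have E1 : 1 < 2 * n + 1 := by omega
  have EN2 : 2 * n - 2 < 2 * n + 1 := by omega
  have EN1 : 2 * n - 1 < 2 * n + 1 := by omega
  have EN : 2 * n < 2 * n + 1 := by omega
  have F0 : 0 + 1 < 2 * n + 1 := by omega
  have FN1 : 2 * n - 1 + 1 < 2 * n + 1 := by omega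
  have FN2 : 2 * n - 2 + 1 < 2 * n + 1 := by omega
  obtain ⟨hσS, hσ0, hσpos⟩ := hGP
  have hz0 : (0 : Fin (2 * n + 1)) = ⟨0, E0⟩ := Fin.ext (by simp)
  rw [hz0] at hσpos ⊢
  have hS1 := hσS.1
  have hS2 := hσS.2.1
  have hS3 := hσS.2.2
  simp only at hS1 hS2 hS3
  rw [hz0] at hS2
  -- closure
  have hclose : ρ ⟨2 * n, EN⟩ = ρ ⟨0, E0⟩ := by
    have h2 : ρ (Fin.last (2 * n)) - ρ ⟨0, E0⟩ = ρ ⟨0, E0⟩ - ρ ⟨0, E0⟩ := hS2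
    have h3 := sub_left_inj.mp h2
    rwa [show (Fin.last (2 * n)) = (⟨2 * n, EN⟩ : Fin (2 * n + 1)) from rfl] at h3
  -- step 1 : the first step goes straight up
  have hb1 : Nbr (ρ ⟨0, E0⟩ - ρ ⟨0, E0⟩) (ρ ⟨1, E1⟩ - ρ ⟨0, E0⟩) := by
    have h := hS1 0 F0
    rwa [hz0] at h
  have hpos1 : 0 < (ρ ⟨1, E1⟩ - ρ ⟨0, E0⟩).2 := by
    have h := hσpos ⟨1, E1⟩ (by exact le_refl 1) (by show 1 ≤ 2 * n - 2; omega)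
    simpa using h
  have hv1 : ρ ⟨1, E1⟩ - ρ ⟨0, E0⟩ = ((0 : ℤ), (1 : ℤ)) := by
    rw [sub_self] at hb1
    unfold Nbr at hb1
    set v := ρ ⟨1, E1⟩ - ρ ⟨0, E0⟩ with hv
    simp only [Prod.fst_zero, Prod.snd_zero, sub_zero] at hb1
    have ha1 := abs_nonneg v.1
    have ha2 : |v.2| = v.2 := abs_of_pos hpos1
    have h1 : v.1 = 0 := by rw [← abs_eq_zero]; omega
    have h2 : v.2 = 1 := by omega
    exact Prod.ext h1 h2
  -- step 2 : the last vertex is at the same height, one step sideways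
  have hb2 : Nbr (ρ ⟨2 * n - 1, EN1⟩ - ρ ⟨0, E0⟩)
      (ρ ⟨2 * n, EN⟩ - ρ ⟨0, E0⟩) := by
    have h := hS1 (2 * n - 1) FN1
    rw [hz0] at h
    simpa only [show 2 * n - 1 + 1 = 2 * n by omega] using h
  have hb3 : Nbr (ρ ⟨2 * n - 2, EN2⟩ - ρ ⟨0, E0⟩)
      (ρ ⟨2 * n - 1, EN1⟩ - ρ ⟨0, E0⟩) := by
    have h := hS1 (2 * n - 2) FN2
    rw [hz0] at h
    simpa only [show 2 * n - 2 + 1 = 2 * n - 1 by omega] using h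
  have hpos2 : 0 < (ρ ⟨2 * n - 2, EN2⟩ - ρ ⟨0, E0⟩).2 := by
    have h := hσpos ⟨2 * n - 2, EN2⟩ (by show 1 ≤ 2 * n - 2; omega)
      (by show 2 * n - 2 ≤ 2 * n - 2; omega)
    simpa using h
  have hA : (ρ ⟨2 * n - 1, EN1⟩ - ρ ⟨0, E0⟩).2 = 0 ∧
      ρ ⟨2 * n - 1, EN1⟩ - ρ ⟨0, E0⟩ ≠ 0 := by
    rw [hclose, sub_self] at hb2
    unfold Nbr at hb2 hb3
    set u := ρ ⟨2 * n - 1, EN1⟩ - ρ ⟨0, E0⟩ with hu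
    set x := ρ ⟨2 * n - 2, EN2⟩ - ρ ⟨0, E0⟩ with hx
    simp only [Prod.fst_zero, Prod.snd_zero, zero_sub, abs_neg] at hb2
    have ha1 := abs_nonneg u.1
    have ha2 := abs_nonneg (u.1 - x.1)
    have ha3 : -(1:ℤ) ≤ u.2 - x.2 := by
      have h5 : |u.2 - x.2| ≤ 1 := by omega
      exact (abs_le.mp h5).1
    have hu2 : 0 ≤ u.2 := by omega
    have hu2' : u.2 ≤ 1 := by
      have := abs_of_nonneg hu2; omega
    have hcase : u.2 = 0 := by
      by_contra hne
      have hu21 : u.2 = 1 := by omega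
      have hu10 : u.1 = 0 := by
        rw [← abs_eq_zero]
        have := abs_of_nonneg hu2; omega
      have hueq : u = ((0:ℤ), (1:ℤ)) := Prod.ext hu10 hu21
      have heq : ρ ⟨1, E1⟩ = ρ ⟨2 * n - 1, EN1⟩ :=
        sub_left_inj.mp (hv1.trans (hueq.symm.trans hu))
      have hi := hS3 ⟨1, E1⟩ ⟨2 * n - 1, EN1⟩ (by show 1 < 2 * n; omega)
        (by show 2 * n - 1 < 2 * n; omega) (by rw [heq])
      have hival := congrArg Fin.val hi
      simp only at hival
      omega
    refine ⟨hcase, ?_⟩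
    intro h
    rw [h] at hb2
    simp at hb2
  -- positivity for middle indices
  have hposk : ∀ k : Fin (2 * n + 1), 1 ≤ k.val → k.val ≤ 2 * n - 2 →
      (ρ ⟨0, E0⟩).2 < (ρ k).2 := by
    intro k h1 h2
    have h := hσpos k h1 h2
    simp only [Prod.snd_sub] at h
    omega
  have hmin : ∀ k : Fin (2 * n + 1), (ρ ⟨0, E0⟩).2 ≤ (ρ k).2 := by
    intro k
    rcases Nat.lt_or_ge k.val 1 with h | h
    · have hk : k = ⟨0, E0⟩ := Fin.ext (show k.val = 0 by omega)
      rw [hk]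
    · rcases Nat.lt_or_ge k.val (2 * n - 1) with h' | h'
      · exact le_of_lt (hposk k h (by omega))
      · rcases Nat.lt_or_ge k.val (2 * n) with h'' | h''
        · have hk : k = ⟨2 * n - 1, EN1⟩ := Fin.ext (show k.val = 2 * n - 1 by omega)
          rw [hk]
          have h9 := hA.1
          simp only [Prod.snd_sub] at h9
          omega
        · have hk : k = ⟨2 * n, EN⟩ := Fin.ext (show k.val = 2 * n by omega)
          rw [hk, hclose]
  have hne : ρ ⟨0, E0⟩ ≠ ρ ⟨2 * n - 1, EN1⟩ := by
    intro h
    exact hA.2 (by rw [← h, sub_self])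
  refine ⟨hne, ?_⟩
  ext y
  simp only [Set.mem_setOf_eq, Set.mem_insert_iff, Set.mem_singleton_iff]
  constructor
  · rintro ⟨hy1, hy2⟩
    rw [← hrange] at hy1
    obtain ⟨k, rfl⟩ := hy1
    have hy0 : (ρ k).2 ≤ (ρ ⟨0, E0⟩).2 := by
      obtain ⟨i0, hi0⟩ : ρ ⟨0, E0⟩ ∈ Set.range ω := by
        rw [← hrange]; exact Set.mem_range_self _
      rw [← hi0]
      exact hy2 i0
    rcases Nat.lt_or_ge k.val 1 with h | h
    · left; congr 1; exact Fin.ext (show k.val = 0 by omega)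
    · rcases Nat.lt_or_ge k.val (2 * n - 1) with h' | h'
      · have := hposk k h (by omega); omega
      · rcases Nat.lt_or_ge k.val (2 * n) with h'' | h''
        · right; congr 1; exact Fin.ext (show k.val = 2 * n - 1 by omega)
        · left
          have hk : k = ⟨2 * n, EN⟩ := Fin.ext (show k.val = 2 * n by omega)
          rw [hk, hclose]
  · intro hy
    have hm : ∀ i : Fin (2 * n + 1), (ρ ⟨0, E0⟩).2 ≤ (ω i).2 := by
      intro i
      obtain ⟨k, hk⟩ : ω i ∈ Set.range ρ := by rw [hrange]; exact Set.mem_range_self _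
      rw [← hk]; exact hmin k
    rcases hy with rfl | rfl
    · exact ⟨by rw [← hrange]; exact Set.mem_range_self _, hm⟩
    · refine ⟨by rw [← hrange]; exact Set.mem_range_self _, ?_⟩
      have he : (ρ ⟨2 * n - 1, EN1⟩).2 = (ρ ⟨0, E0⟩).2 := by
        have h9 := hA.1
        simp only [Prod.snd_sub] at h9
        omega
      intro i
      rw [he]; exact hm i

end SAPhelp

namespace SAPhelp

variable {n : ℕ} {ω : Fin (2 * n + 1) → ℤ × ℤ}

lemma modeq_eq_of_lt (hn : 0 < n) {a b : ℕ} (ha : a < 2 * n) (hb : b < 2 * n)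
    (h : a ≡ b [MOD 2 * n]) : a = b := by
  rwa [Nat.ModEq, Nat.mod_eq_of_lt ha, Nat.mod_eq_of_lt hb] at h

lemma rep_val0 (hn : 0 < n) (j : ℕ) (r : Bool) : repSAP n j r ω 0 = w n ω j := by
  cases r
  · rw [rep_false hn]
    exact w_congr hn (by rw [Fin.val_zero, Nat.zero_add])
  · rw [rep_true hn]
    apply w_congr hn
    rw [Fin.val_zero, Nat.sub_zero]
    exact Nat.add_mod_left (2 * n) j

lemma rep_valN1_false (hn : 0 < n) (j : ℕ) (h : 2 * n - 1 < 2 * n + 1) :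
    repSAP n j false ω ⟨2 * n - 1, h⟩ = w n ω (2 * n - 1 + j) := by
  rw [rep_false hn]

lemma rep_valN1_true (hn : 0 < n) (j : ℕ) (h : 2 * n - 1 < 2 * n + 1) :
    repSAP n j true ω ⟨2 * n - 1, h⟩ = w n ω (1 + j) := by
  rw [rep_true hn]
  exact w_congr hn (by rw [show 2 * n - (2 * n - 1) = 1 by omega])

/-- every vertex not among the two minimal ones is strictly above them -/
lemma above (hn : 0 < n) (hω : IsSAP n ω) {p q : ℤ × ℤ}
    (hmin : {x : ℤ × ℤ | x ∈ Set.range ω ∧ ∀ i : Fin (2 * n + 1), x.2 ≤ (ω i).2} = {p, q})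
    {I : ℕ} (hwp : w n ω I = p) (hwq : w n ω (I + 1) = q)
    {a : ℕ} (hap : ¬ a ≡ I [MOD 2 * n]) (haq : ¬ a ≡ (I + 1) [MOD 2 * n]) :
    q.2 < (w n ω a).2 ∧ p.2 < (w n ω a).2 := by
  have hpmem : p ∈ {x : ℤ × ℤ | x ∈ Set.range ω ∧ ∀ i : Fin (2 * n + 1), x.2 ≤ (ω i).2} := by
    rw [hmin]; left; rfl
  have hqmem : q ∈ {x : ℤ × ℤ | x ∈ Set.range ω ∧ ∀ i : Fin (2 * n + 1), x.2 ≤ (ω i).2} := by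
    rw [hmin]; right; rfl
  obtain ⟨⟨ip, hip⟩, hpall⟩ := hpmem
  obtain ⟨⟨iq, hiq⟩, hqall⟩ := hqmem
  have hpq2 : p.2 = q.2 := le_antisymm (by rw [← hiq]; exact hpall iq) (by rw [← hip]; exact hqall ip)
  have hv : w n ω a ∈ Set.range ω := by
    rw [← w_range hn hω.2.1]; exact Set.mem_range_self _
  have key : q.2 < (w n ω a).2 := by
    by_contra hle
    push_neg at hle
    have hmem : w n ω a ∈ ({p, q} : Set (ℤ × ℤ)) := by
      rw [← hmin]
      refine ⟨hv, fun i => ?_⟩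
      obtain ⟨k, hk⟩ : (ω i : ℤ × ℤ) ∈ Set.range ω := Set.mem_range_self _
      calc (w n ω a).2 ≤ q.2 := hle
      _ ≤ (ω i).2 := hqall i
    rcases hmem with hm | hm
    · exact hap (w_inj hn hω (hm.trans hwp.symm))
    · exact haq (w_inj hn hω (hm.trans hwq.symm))
  exact ⟨key, by omega⟩

end SAPhelp

namespace SAPhelp

variable {n : ℕ} {ω : Fin (2 * n + 1) → ℤ × ℤ}

set_option maxHeartbeats 1000000 in
lemma cancel_left (hn : 0 < n) {a b c : ℕ} (ha : a < 2 * n) (hb : b < 2 * n)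
    (h : a + c ≡ b + c [MOD 2 * n]) : a = b :=
  modeq_eq_of_lt hn ha hb (h.add_right_cancel' c)

lemma main_count (hn : 2 ≤ n) (hω : IsSAP n ω) (p q : ℤ × ℤ) (hpq : p ≠ q)
    (hmin : {x : ℤ × ℤ | x ∈ Set.range ω ∧ ∀ i : Fin (2 * n + 1), x.2 ≤ (ω i).2} = {p, q})
    (i : Fin (2 * n)) (hip : ω ⟨i.val, Nat.lt_succ_of_lt i.isLt⟩ = p)
    (hiq : ω ⟨i.val + 1, Nat.succ_lt_succ i.isLt⟩ = q) :
    {ρ : Fin (2 * n + 1) → ℤ × ℤ |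
        (∃ j < 2 * n, ρ = repSAP n j false ω ∨ ρ = repSAP n j true ω) ∧
        GammaPlus n (fun k => ρ k - ρ 0)}
      = {repSAP n ((i.val + 1) % (2 * n)) false ω, repSAP n i.val true ω} := by
  have h0 : 0 < n := by omega
  have h2n : 0 < 2 * n := by omega
  have EN1 : 2 * n - 1 < 2 * n + 1 := by omega
  have hI : i.val < 2 * n := i.isLt
  have hwp : w n ω i.val = p := by
    rw [w_eq h0 hω.2.1 (Nat.lt_succ_of_lt i.isLt)]; exact hip
  have hwq : w n ω (i.val + 1) = q := by
    rw [w_eq h0 hω.2.1 (Nat.succ_lt_succ i.isLt)]; exact hiq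
  have hmodI1 : (i.val + 1) % (2 * n) ≡ i.val + 1 [MOD 2 * n] := Nat.mod_modEq _ _
  -- Γ⁺ membership of the two distinguished representatives
  have hGP1 : GammaPlus n (fun k => repSAP n ((i.val + 1) % (2 * n)) false ω k
      - repSAP n ((i.val + 1) % (2 * n)) false ω 0) := by
    have hfun : (fun k => repSAP n ((i.val + 1) % (2 * n)) false ω k
        - repSAP n ((i.val + 1) % (2 * n)) false ω 0)
        = fun k : Fin (2 * n + 1) => w n ω (k.val + (i.val + 1) % (2 * n))
            - w n ω ((i.val + 1) % (2 * n)) := by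
      funext k
      rw [rep_false h0, rep_val0 h0]
    rw [hfun]
    refine ⟨isSAP_rotw h0 hω _ _, by simp only [Fin.val_zero, Nat.zero_add, sub_self], ?_⟩
    intro k hk1 hk2
    have e1 : w n ω (k.val + (i.val + 1) % (2 * n)) = w n ω (k.val + (i.val + 1)) :=
      w_congr h0 (hmodI1.add_left k.val)
    have e2 : w n ω ((i.val + 1) % (2 * n)) = q := (w_congr h0 hmodI1).trans hwq
    have hap : ¬ (k.val + (i.val + 1)) ≡ i.val [MOD 2 * n] := by
      intro hc
      have hc2 : (k.val + 1) + i.val ≡ 0 + i.val [MOD 2 * n] := by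
        rw [Nat.zero_add]
        rwa [show k.val + (i.val + 1) = (k.val + 1) + i.val by omega] at hc
      have := cancel_left h0 (by omega) (by omega) hc2
      omega
    have haq : ¬ (k.val + (i.val + 1)) ≡ i.val + 1 [MOD 2 * n] := by
      intro hc
      have hc2 : k.val + (i.val + 1) ≡ 0 + (i.val + 1) [MOD 2 * n] := by
        rw [Nat.zero_add]; exact hc
      have := cancel_left h0 (by omega) (by omega) hc2
      omega
    have hup := (above h0 hω hmin hwp hwq hap haq).1
    simp only [Prod.snd_sub, e1, e2]
    omega
  have hGP2 : GammaPlus n (fun k => repSAP n i.val true ω k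
      - repSAP n i.val true ω 0) := by
    have hfun : (fun k => repSAP n i.val true ω k - repSAP n i.val true ω 0)
        = fun k : Fin (2 * n + 1) => w n ω ((2 * n - k.val) + i.val) - w n ω i.val := by
      funext k
      rw [rep_true h0, rep_val0 h0]
    rw [hfun]
    refine ⟨isSAP_revw h0 hω _ _, ?_, ?_⟩
    · simp only [Fin.val_zero, Nat.sub_zero]
      rw [sub_eq_zero]
      exact w_congr h0 (Nat.add_mod_left (2 * n) i.val)
    · intro k hk1 hk2
      have hap : ¬ (2 * n - k.val + i.val) ≡ i.val [MOD 2 * n] := by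
        intro hc
        have hc2 : (2 * n - k.val) + i.val ≡ 0 + i.val [MOD 2 * n] := by
          rw [Nat.zero_add]; exact hc
        have := cancel_left h0 (by omega) (by omega) hc2
        omega
      have haq : ¬ (2 * n - k.val + i.val) ≡ i.val + 1 [MOD 2 * n] := by
        intro hc
        have hc2 : (2 * n - k.val) + i.val ≡ 1 + i.val [MOD 2 * n] := by
          rwa [show i.val + 1 = 1 + i.val by omega] at hc
        have := cancel_left h0 (by omega) (by omega) hc2
        omega
      have hup := (above h0 hω hmin hwp hwq hap haq).2
      simp only [Prod.snd_sub]
      rw [hwp]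
      omega
  ext ρ
  simp only [Set.mem_setOf_eq, Set.mem_insert_iff, Set.mem_singleton_iff]
  constructor
  · rintro ⟨⟨j, hj, hc⟩, hGP⟩
    rcases hc with rfl | rfl
    · -- rotation case
      obtain ⟨hne, hmin2⟩ := gp_min hn hω (range_rep h0 hω.2.1 j false) hGP
      have h1 : repSAP n j false ω 0 ∈ ({p, q} : Set (ℤ × ℤ)) := by
        rw [← hmin, hmin2]; exact Set.mem_insert _ _
      have h2 : repSAP n j false ω ⟨2 * n - 1, EN1⟩ ∈ ({p, q} : Set (ℤ × ℤ)) := by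
        rw [← hmin, hmin2]; exact Set.mem_insert_of_mem _ rfl
      rw [rep_val0 h0] at h1
      rw [rep_valN1_false h0 j EN1] at h2
      rcases h1 with h1 | h1
      · exfalso
        have hjI : j = i.val := modeq_eq_of_lt h0 hj hI (w_inj h0 hω (h1.trans hwp.symm))
        rw [hjI] at h2
        rcases h2 with h2 | h2
        · have hc := w_inj h0 hω (h2.trans hwp.symm)
          have hc2 : (2 * n - 1) + i.val ≡ 0 + i.val [MOD 2 * n] := by
            rw [Nat.zero_add]; exact hc
          have := cancel_left h0 (by omega) (by omega) hc2
          omega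
        · have hc := w_inj h0 hω (h2.trans hwq.symm)
          have hc2 : (2 * n - 1) + i.val ≡ 1 + i.val [MOD 2 * n] := by
            rwa [show i.val + 1 = 1 + i.val by omega] at hc
          have := cancel_left h0 (by omega) (by omega) hc2
          omega
      · left
        have hjI : j = (i.val + 1) % (2 * n) := by
          have hc : j % (2 * n) = (i.val + 1) % (2 * n) := w_inj h0 hω (h1.trans hwq.symm)
          rwa [Nat.mod_eq_of_lt hj] at hc
        rw [hjI]
    · -- reversal case
      obtain ⟨hne, hmin2⟩ := gp_min hn hω (range_rep h0 hω.2.1 j true) hGP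
      have h1 : repSAP n j true ω 0 ∈ ({p, q} : Set (ℤ × ℤ)) := by
        rw [← hmin, hmin2]; exact Set.mem_insert _ _
      have h2 : repSAP n j true ω ⟨2 * n - 1, EN1⟩ ∈ ({p, q} : Set (ℤ × ℤ)) := by
        rw [← hmin, hmin2]; exact Set.mem_insert_of_mem _ rfl
      rw [rep_val0 h0] at h1
      rw [rep_valN1_true h0 j EN1] at h2
      rcases h1 with h1 | h1
      · right
        have hjI : j = i.val := modeq_eq_of_lt h0 hj hI (w_inj h0 hω (h1.trans hwp.symm))
        rw [hjI]
      · exfalso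
        have hcj : j ≡ i.val + 1 [MOD 2 * n] := w_inj h0 hω (h1.trans hwq.symm)
        rcases h2 with h2 | h2
        · have hc := w_inj h0 hω (h2.trans hwp.symm)
          have hA1 : 1 + (i.val + 1) ≡ 1 + j [MOD 2 * n] := hcj.symm.add_left 1
          have hA2 : 1 + (i.val + 1) ≡ i.val [MOD 2 * n] := hA1.trans hc
          have hA3 : 2 + i.val ≡ 0 + i.val [MOD 2 * n] := by
            rw [show (2:ℕ) + i.val = 1 + (i.val + 1) by omega,
              show (0:ℕ) + i.val = i.val by omega]
            exact hA2
          have h' := Nat.ModEq.add_right_cancel' i.val hA3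
          have := modeq_eq_of_lt h0 (by omega) (by omega) h'
          omega
        · have hc := w_inj h0 hω (h2.trans hwq.symm)
          have hA1 : 1 + (i.val + 1) ≡ 1 + j [MOD 2 * n] := hcj.symm.add_left 1
          have hA2 : 1 + (i.val + 1) ≡ i.val + 1 [MOD 2 * n] := hA1.trans hc
          have hA3 : 1 + (i.val + 1) ≡ 0 + (i.val + 1) [MOD 2 * n] := by
            rwa [show (0:ℕ) + (i.val + 1) = i.val + 1 by omega]
          have h' := Nat.ModEq.add_right_cancel' (i.val + 1) hA3
          have := modeq_eq_of_lt h0 (by omega) (by omega) h'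
          omega
  · intro hc
    rcases hc with rfl | rfl
    · exact ⟨⟨(i.val + 1) % (2 * n), Nat.mod_lt _ h2n, Or.inl rfl⟩, hGP1⟩
    · exact ⟨⟨i.val, hI, Or.inr rfl⟩, hGP2⟩

end SAPhelp

namespace SAPhelp

variable {n : ℕ} {ω : Fin (2 * n + 1) → ℤ × ℤ}

set_option maxHeartbeats 1000000 in
lemma keyA (hn : 2 ≤ n) (hω : IsSAP n ω) {ρ : Fin (2 * n + 1) → ℤ × ℤ}
    (hmem : (∃ j < 2 * n, ρ = repSAP n j false ω ∨ ρ = repSAP n j true ω) ∧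
        GammaPlus n (fun k => ρ k - ρ 0)) :
    ∃ p q : ℤ × ℤ, p ≠ q ∧
      {x : ℤ × ℤ | x ∈ Set.range ω ∧ ∀ i : Fin (2 * n + 1), x.2 ≤ (ω i).2} = {p, q} ∧
      ∃ i : Fin (2 * n),
        (ω ⟨i.val, Nat.lt_succ_of_lt i.isLt⟩ = p ∧
            ω ⟨i.val + 1, Nat.succ_lt_succ i.isLt⟩ = q) ∨
        (ω ⟨i.val, Nat.lt_succ_of_lt i.isLt⟩ = q ∧
            ω ⟨i.val + 1, Nat.succ_lt_succ i.isLt⟩ = p) := by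
  have h0 : 0 < n := by omega
  have EN1 : 2 * n - 1 < 2 * n + 1 := by omega
  obtain ⟨⟨j, hj, hc⟩, hGP⟩ := hmem
  rcases hc with rfl | rfl
  · obtain ⟨hne, hmin2⟩ := gp_min hn hω (range_rep h0 hω.2.1 j false) hGP
    refine ⟨_, _, hne, hmin2, ?_⟩
    obtain ⟨i, h1, h2⟩ := edge_w h0 hω.2.1 (2 * n - 1 + j)
    refine ⟨i, Or.inr ⟨?_, ?_⟩⟩
    · rw [h1]
      exact (rep_valN1_false h0 j EN1).symm
    · rw [h2, rep_val0 h0 j false]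
      apply w_congr h0
      rw [show 2 * n - 1 + j + 1 = 2 * n + j by omega]
      exact Nat.add_mod_left _ _
  · obtain ⟨hne, hmin2⟩ := gp_min hn hω (range_rep h0 hω.2.1 j true) hGP
    refine ⟨_, _, hne, hmin2, ?_⟩
    obtain ⟨i, h1, h2⟩ := edge_w h0 hω.2.1 j
    refine ⟨i, Or.inl ⟨?_, ?_⟩⟩
    · rw [h1]
      exact (rep_val0 h0 j true).symm
    · rw [h2]
      exact ((w_congr h0 (by rw [Nat.add_comm]) :
        w n ω (j + 1) = w n ω (1 + j))).trans (rep_valN1_true h0 j EN1).symm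
  
lemma main_two (hn : 2 ≤ n) (hω : IsSAP n ω) (p q : ℤ × ℤ) (hpq : p ≠ q)
    (hmin : {x : ℤ × ℤ | x ∈ Set.range ω ∧ ∀ i : Fin (2 * n + 1), x.2 ≤ (ω i).2} = {p, q})
    (i : Fin (2 * n)) (hip : ω ⟨i.val, Nat.lt_succ_of_lt i.isLt⟩ = p)
    (hiq : ω ⟨i.val + 1, Nat.succ_lt_succ i.isLt⟩ = q) :
    Set.ncard {ρ : Fin (2 * n + 1) → ℤ × ℤ |
        (∃ j < 2 * n, ρ = repSAP n j false ω ∨ ρ = repSAP n j true ω) ∧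
        GammaPlus n (fun k => ρ k - ρ 0)} = 2 := by
  have h0 : 0 < n := by omega
  rw [main_count hn hω p q hpq hmin i hip hiq]
  apply Set.ncard_pair
  intro h
  have hcf := congrFun h 0
  rw [rep_val0 h0, rep_val0 h0] at hcf
  rw [w_congr h0 (Nat.mod_modEq (i.val + 1) (2 * n))] at hcf
  refine hpq ?_
  calc p = w n ω i.val := by
        rw [w_eq h0 hω.2.1 (Nat.lt_succ_of_lt i.isLt)]; exact hip.symm
  _ = w n ω (i.val + 1) := hcf.symm
  _ = q := by
        rw [w_eq h0 hω.2.1 (Nat.succ_lt_succ i.isLt)]; exact hiq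

end SAPhelp


set_option maxHeartbeats 1000000 in
/-- Let `n ≥ 2` and let `ω` be a SAP of length `2n` in `ℤ²`.  Among the `4n`
representatives `ρ ∈ {T^j ω, (T^j ω)^R : 0 ≤ j ≤ 2n−1}`, the number of `ρ` whose
translate `ρ − ρ_0` lies in `Γ⁺_{2n}` is either `0` or `2`; it equals `2` if and
only if the set of vertices of `ω` with minimal second coordinate consists of
exactly two points and these two points are joined by an edge of `ω`. -/
theorem sap_halfplane_representatives (n : ℕ) (hn : 2 ≤ n)
    (ω : Fin (2 * n + 1) → ℤ × ℤ) (hω : IsSAP n ω) :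
    (Set.ncard {ρ : Fin (2 * n + 1) → ℤ × ℤ |
          (∃ j < 2 * n, ρ = repSAP n j false ω ∨ ρ = repSAP n j true ω) ∧
          GammaPlus n (fun i => ρ i - ρ 0)} = 0 ∨
      Set.ncard {ρ : Fin (2 * n + 1) → ℤ × ℤ |
          (∃ j < 2 * n, ρ = repSAP n j false ω ∨ ρ = repSAP n j true ω) ∧
          GammaPlus n (fun i => ρ i - ρ 0)} = 2) ∧
    (Set.ncard {ρ : Fin (2 * n + 1) → ℤ × ℤ |
          (∃ j < 2 * n, ρ = repSAP n j false ω ∨ ρ = repSAP n j true ω) ∧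
          GammaPlus n (fun i => ρ i - ρ 0)} = 2 ↔
      ∃ p q : ℤ × ℤ, p ≠ q ∧
        {x : ℤ × ℤ | x ∈ Set.range ω ∧ ∀ i : Fin (2 * n + 1), x.2 ≤ (ω i).2} = {p, q} ∧
        ∃ i : Fin (2 * n),
          (ω ⟨i.val, Nat.lt_succ_of_lt i.isLt⟩ = p ∧
              ω ⟨i.val + 1, Nat.succ_lt_succ i.isLt⟩ = q) ∨
          (ω ⟨i.val, Nat.lt_succ_of_lt i.isLt⟩ = q ∧
              ω ⟨i.val + 1, Nat.succ_lt_succ i.isLt⟩ = p)) := by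
  have keyB : (∃ p q : ℤ × ℤ, p ≠ q ∧
        {x : ℤ × ℤ | x ∈ Set.range ω ∧ ∀ i : Fin (2 * n + 1), x.2 ≤ (ω i).2} = {p, q} ∧
        ∃ i : Fin (2 * n),
          (ω ⟨i.val, Nat.lt_succ_of_lt i.isLt⟩ = p ∧
              ω ⟨i.val + 1, Nat.succ_lt_succ i.isLt⟩ = q) ∨
          (ω ⟨i.val, Nat.lt_succ_of_lt i.isLt⟩ = q ∧
              ω ⟨i.val + 1, Nat.succ_lt_succ i.isLt⟩ = p)) →
      Set.ncard {ρ : Fin (2 * n + 1) → ℤ × ℤ |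
          (∃ j < 2 * n, ρ = repSAP n j false ω ∨ ρ = repSAP n j true ω) ∧
          GammaPlus n (fun i => ρ i - ρ 0)} = 2 := by
    rintro ⟨p, q, hpq, hmin, i, hedge⟩
    rcases hedge with ⟨hip, hiq⟩ | ⟨hip, hiq⟩
    · exact SAPhelp.main_two hn hω p q hpq hmin i hip hiq
    · exact SAPhelp.main_two hn hω q p hpq.symm (hmin.trans (Set.pair_comm p q)) i hip hiq
  refine ⟨?_, ?_, keyB⟩
  · rcases Set.eq_empty_or_nonempty {ρ : Fin (2 * n + 1) → ℤ × ℤ |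
        (∃ j < 2 * n, ρ = repSAP n j false ω ∨ ρ = repSAP n j true ω) ∧
        GammaPlus n (fun i => ρ i - ρ 0)} with he | ⟨ρ, hρ⟩
    · left; rw [he]; exact Set.ncard_empty _
    · right; exact keyB (SAPhelp.keyA hn hω hρ)
  · intro h2
    have hne : ({ρ : Fin (2 * n + 1) → ℤ × ℤ |
        (∃ j < 2 * n, ρ = repSAP n j false ω ∨ ρ = repSAP n j true ω) ∧
        GammaPlus n (fun i => ρ i - ρ 0)} : Set (Fin (2 * n + 1) → ℤ × ℤ)).Nonempty :=
      Set.nonempty_of_ncard_ne_zero (by rw [h2]; exact two_ne_zero)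
    obtain ⟨ρ, hρ⟩ := hne
    exact SAPhelp.keyA hn hω hρ
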